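/- Let P be a minimal right ideal of a ring R with identity. If P is an almost prime right ideal but not an idempotent ideal, then P is a weakly prime right ideal. -/

import Mathlib

variable {R : Type*}

/-- `P` is a right ideal of the (possibly nonunital, noncommutative) ring `R`. -/
def IsRightIdeal [NonUnitalRing R] (P : AddSubgroup R) : Prop :=
  ∀ a ∈ P, ∀ r : R, a * r ∈ P

/-- The product `AB` of two right ideals: the additive subgroup generated by products. -/
def idealMul [NonUnitalRing R] (A B : AddSubgroup R) : AddSubgroup R :=
  AddSubgroup.closure {x : R | ∃ a ∈ A, ∃ b ∈ B, x = a * b}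

/-- `P` is a weakly prime right ideal. -/
def IsWeaklyPrimeRight [NonUnitalRing R] (P : AddSubgroup R) : Prop :=
  IsRightIdeal P ∧ P ≠ ⊤ ∧
    ∀ A B : AddSubgroup R, IsRightIdeal A → IsRightIdeal B →
      idealMul A B ≠ ⊥ → idealMul A B ≤ P → A ≤ P ∨ B ≤ P

/-- `P` is an almost prime right ideal. -/
def IsAlmostPrimeRight [NonUnitalRing R] (P : AddSubgroup R) : Prop :=
  IsRightIdeal P ∧ P ≠ ⊤ ∧
    ∀ A B : AddSubgroup R, IsRightIdeal A → IsRightIdeal B →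
      idealMul A B ≤ P → ¬ idealMul A B ≤ idealMul P P → A ≤ P ∨ B ≤ P

/-- A minimal right ideal of a ring with identity that is almost prime but not
idempotent is weakly prime. -/
theorem minimal_almostPrime_not_idempotent_weaklyPrime [Ring R] (P : AddSubgroup R)
    (hP : IsRightIdeal P) (hne : P ≠ ⊥)
    (hmin : ∀ I : AddSubgroup R, IsRightIdeal I → I ≤ P → I = ⊥ ∨ I = P)
    (halmost : IsAlmostPrimeRight P) (hnotidem : idealMul P P ≠ P) :
    IsWeaklyPrimeRight P := by
  obtain ⟨hPri, hPtop, hap⟩ := halmost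
  -- P*P is a right ideal
  have hPPri : IsRightIdeal (idealMul P P) := by
    intro a ha r
    induction ha using AddSubgroup.closure_induction with
    | mem x hx =>
        obtain ⟨p, hp, q, hq, rfl⟩ := hx
        rw [mul_assoc]
        exact AddSubgroup.subset_closure ⟨p, hp, q * r, hP q hq r, rfl⟩
    | zero => simpa using (idealMul P P).zero_mem
    | add x y _ _ hx hy => rw [add_mul]; exact (idealMul P P).add_mem hx hy
    | neg x _ hx => rw [neg_mul]; exact (idealMul P P).neg_mem hx
  have hPPle : idealMul P P ≤ P := by
    apply (AddSubgroup.closure_le _).2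
    rintro x ⟨p, hp, q, hq, rfl⟩
    exact hP p hp q
  have hPPbot : idealMul P P = ⊥ := by
    rcases hmin (idealMul P P) hPPri hPPle with h | h
    · exact h
    · exact absurd h hnotidem
  refine ⟨hPri, hPtop, ?_⟩
  intro A B hA hB hABne hABle
  exact hap A B hA hB hABle (by rw [hPPbot]; exact fun h => hABne (le_bot_iff.mp h))
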